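/- Let D be a finitely generated abelian group and S a D-graded commutative ring which is an integral domain and which possesses a homogeneous unit of degree d for every d ∈ D. Then the shear map ψ: S ⊗_{S_0} S → S[D] is bijective, where S[D] denotes the group algebra AddMonoidAlgebra S D and ψ is the S_0-linear map induced by the S_0-bilinear map (g, h) ↦ Σ_{d∈D} (g_d·h)·χ^d (so that for homogeneous g, ψ(g ⊗ h) = (g·h)·χ^{deg g}). -/

import Mathlib

open scoped TensorProduct

variable {D S : Type*} [AddCommGroup D] [AddGroup.FG D] [DecidableEq D] [CommRing S]
variable (𝒜 : D → AddSubgroup S) [GradedRing 𝒜]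

/-- The inclusion of the degree-zero subring `S_0 = 𝒜 0` into `S`, as a ring homomorphism. -/
def gradeZeroInclusion : (𝒜 0) →+* S where
  toFun := Subtype.val
  map_one' := rfl
  map_mul' _ _ := rfl
  map_zero' := rfl
  map_add' _ _ := rfl

/-- `S` is an algebra over its degree-zero subring `S_0 = 𝒜 0`. -/
noncomputable instance : Algebra (𝒜 0) S := (gradeZeroInclusion 𝒜).toAlgebra

/-- If `u` is a unit homogeneous of degree `d` and `g` is homogeneous of degree `d`, in a
domain, then `u⁻¹ * g` has degree zero. -/
lemma inv_mul_mem_grade_zero [IsDomain S] {d : D} {u : Sˣ} (hu : (u : S) ∈ 𝒜 d)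
    {g : S} (hg : g ∈ 𝒜 d) : ((↑u⁻¹ : S) * g) ∈ 𝒜 0 := by
  classical
  set x : S := (↑u⁻¹ : S) * g with hxdef
  have hux : (u : S) * x = g := by
    rw [hxdef, ← mul_assoc, Units.mul_inv, one_mul]
  have hcomp : ∀ e : D, e ≠ 0 → (DirectSum.decompose 𝒜 x e : S) = 0 := by
    intro e he
    have h1 : (DirectSum.decompose 𝒜 ((u : S) * x) (d + e) : S)
        = (u : S) * (DirectSum.decompose 𝒜 x e : S) :=
      DirectSum.coe_decompose_mul_add_of_left_mem 𝒜 hu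
    have h2 : (DirectSum.decompose 𝒜 g (d + e) : S) = 0 :=
      DirectSum.decompose_of_mem_ne 𝒜 hg (fun h => he (by rwa [left_eq_add] at h))
    rw [hux, h2] at h1
    have hu0 : (u : S) ≠ 0 := Units.ne_zero u
    exact (mul_eq_zero.mp h1.symm).resolve_left hu0
  have hsum := DirectSum.sum_support_decompose 𝒜 x
  rw [← hsum]
  refine AddSubgroup.sum_mem _ fun i hi => ?_
  rcases eq_or_ne i 0 with rfl | h
  · exact SetLike.coe_mem _
  · exact absurd (ZeroMemClass.coe_eq_zero.mp (hcomp i h))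
      (DFinsupp.mem_support_iff.mp hi)

set_option maxHeartbeats 1000000 in
/-- Let `S` be a `D`-graded commutative integral domain possessing a homogeneous
unit of degree `d` for every `d ∈ D`.  Then the shear map `ψ : S ⊗_{S_0} S → S[D]`, the
`S_0`-linear map with `ψ(g ⊗ h) = (g·h)·χ^{deg g}` for homogeneous `g`, is bijective. -/
theorem stmt_9 [IsDomain S]
    (hunits : ∀ d : D, ∃ u : Sˣ, (u : S) ∈ 𝒜 d)
    (ψ : S ⊗[𝒜 0] S →ₗ[𝒜 0] AddMonoidAlgebra S D)
    (hψ : ∀ (d : D) (g : S), g ∈ 𝒜 d → ∀ h : S,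
      ψ (g ⊗ₜ h) = AddMonoidAlgebra.single d (g * h)) :
    Function.Bijective ψ := by
  classical
  -- choose homogeneous units
  choose u hu using hunits
  -- the candidate inverse, as an additive map
  obtain ⟨φ, hφ⟩ : ∃ φ : AddMonoidAlgebra S D →+ S ⊗[𝒜 0] S, ∀ (d : D) (s : S),
      φ (AddMonoidAlgebra.single d s) = (u d : S) ⊗ₜ[𝒜 0] ((↑(u d)⁻¹ : S) * s) := by
    refine ⟨(Finsupp.liftAddHom (fun d =>
      ((TensorProduct.mk (𝒜 0) S S (u d : S)).toAddMonoidHom).comp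
        (AddMonoidHom.mulLeft ((↑(u d)⁻¹ : S))))).comp
        AddMonoidAlgebra.coeffAddEquiv.toAddMonoidHom, fun d s => ?_⟩
    show Finsupp.liftAddHom _ (Finsupp.single d s) = _
    rw [Finsupp.liftAddHom_apply_single]
    rfl
  constructor
  · -- injectivity: φ is a left inverse of ψ
    have hleft : ∀ x : S ⊗[𝒜 0] S, φ (ψ x) = x := by
      intro x
      induction x using TensorProduct.induction_on with
      | zero => simp
      | add a b ha hb => rw [map_add, map_add, ha, hb]
      | tmul g h =>
        -- decompose g into homogeneous components
        rw [show (g ⊗ₜ[𝒜 0] h : S ⊗[𝒜 0] S)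
            = ∑ i ∈ (DirectSum.decompose 𝒜 g).support,
                ((DirectSum.decompose 𝒜 g i : S) ⊗ₜ[𝒜 0] h) from by
          rw [← TensorProduct.sum_tmul, DirectSum.sum_support_decompose]]
        rw [map_sum, map_sum]
        refine Finset.sum_congr rfl fun i _ => ?_
        rw [hψ i _ (SetLike.coe_mem _) h, hφ]
        have hc : ((↑(u i)⁻¹ : S) * (DirectSum.decompose 𝒜 g i : S)) ∈ 𝒜 0 :=
          inv_mul_mem_grade_zero 𝒜 (hu i) (SetLike.coe_mem _)
        have : (↑(u i)⁻¹ : S) * ((DirectSum.decompose 𝒜 g i : S) * h)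
            = (⟨_, hc⟩ : 𝒜 0) • h := by
          rw [Algebra.smul_def]
          show _ = ((↑(u i)⁻¹ : S) * (DirectSum.decompose 𝒜 g i : S)) * h
          ring
        rw [this, ← TensorProduct.smul_tmul (⟨_, hc⟩ : 𝒜 0) ((u i : S)) h]
        congr 1
        rw [Algebra.smul_def]
        show ((↑(u i)⁻¹ : S) * (DirectSum.decompose 𝒜 g i : S)) * (u i : S) = _
        rw [mul_comm, ← mul_assoc, mul_comm ((u i : S)) ((↑(u i)⁻¹ : S)),
          Units.inv_mul, one_mul]
    exact Function.LeftInverse.injective hleft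
  · -- surjectivity
    have hright : ∀ f : AddMonoidAlgebra S D, ψ (φ f) = f := by
      intro f
      induction f using AddMonoidAlgebra.induction_linear with
      | zero => rw [map_zero, map_zero]
      | add a b ha hb => rw [map_add, map_add, ha, hb]
      | single d s =>
        rw [hφ, hψ d _ (hu d), Units.mul_inv_cancel_left]
    exact fun f => ⟨φ f, hright f⟩
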